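/- Let 0 ≤ q < 1 and 0 ≤ q_a < 1, let E_q be the single-qubit depolarizing channel and A_{q_a} the antinoise map, and set λ = (1−q)²/(1−q_a)². Then the two-copy composite channel satisfies ((A_{q_a}∘E_q) ⊗ (A_{q_a}∘E_q))(I₄) = I₄ and ((A_{q_a}∘E_q) ⊗ (A_{q_a}∘E_q))(S) = ((1−λ)/2)·I₄ + λ·S, where S is the swap operator on ℂ²⊗ℂ². In particular λ > 1 (excess antinoise amplifies S configurations) iff q < q_a, and λ < 1 (excess noise damps S configurations) iff q > q_a. -/

import Mathlib

open Kronecker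

/-- The single-qubit depolarizing channel with rate `q`:
`E_q(ρ) = (1−q)·ρ + q·tr(ρ)·I/2`. -/
noncomputable def depol (q : ℝ) (ρ : Matrix (Fin 2) (Fin 2) ℂ) :
    Matrix (Fin 2) (Fin 2) ℂ :=
  (1 - (q : ℂ)) • ρ + ((q : ℂ) * ρ.trace / 2) • (1 : Matrix (Fin 2) (Fin 2) ℂ)

/-- The single-qubit antinoise map with rate `q_a`:
`A_{q_a}(ρ) = (ρ − q_a·tr(ρ)·I/2)/(1−q_a)`. -/
noncomputable def antinoise (qa : ℝ) (ρ : Matrix (Fin 2) (Fin 2) ℂ) :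
    Matrix (Fin 2) (Fin 2) ℂ :=
  (1 - (qa : ℂ))⁻¹ • (ρ - ((qa : ℂ) * ρ.trace / 2) • (1 : Matrix (Fin 2) (Fin 2) ℂ))

/-- The swap operator on `ℂ² ⊗ ℂ²`: `S(u⊗v) = v⊗u`. -/
def swapOp : Matrix (Fin 2 × Fin 2) (Fin 2 × Fin 2) ℂ :=
  Matrix.of fun p q => if p.1 = q.2 ∧ p.2 = q.1 then (1 : ℂ) else 0

/-- With `λ = (1−q)²/(1−q_a)²`, the two-copy composite channel
`(A_{q_a}∘E_q) ⊗ (A_{q_a}∘E_q)` fixes the identity and sends the swap operator `S` to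
`((1−λ)/2)·I₄ + λ·S`; moreover `λ > 1` iff `q < q_a` (excess antinoise amplifies `S`)
and `λ < 1` iff `q > q_a` (excess noise damps `S`). -/
lemma M_eq (q qa : ℝ) (h : (1:ℂ) - (qa:ℂ) ≠ 0) (A : Matrix (Fin 2) (Fin 2) ℂ) :
    antinoise qa (depol q A) =
      ((1 - (q:ℂ)) / (1 - (qa:ℂ))) • A +
      ((((q:ℂ) - qa) / (2 * (1 - qa))) * A.trace) • (1 : Matrix (Fin 2) (Fin 2) ℂ) := by
  simp only [antinoise, depol, Matrix.trace_add, Matrix.trace_smul, Matrix.trace_one,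
    smul_eq_mul, Fintype.card_fin, Nat.cast_ofNat]
  match_scalars
  all_goals field_simp
  all_goals ring

lemma swap_decomp :
    swapOp = Matrix.single 0 0 (1:ℂ) ⊗ₖ Matrix.single 0 0 (1:ℂ)
      + Matrix.single 0 1 (1:ℂ) ⊗ₖ Matrix.single 1 0 (1:ℂ)
      + Matrix.single 1 0 (1:ℂ) ⊗ₖ Matrix.single 0 1 (1:ℂ)
      + Matrix.single 1 1 (1:ℂ) ⊗ₖ Matrix.single 1 1 (1:ℂ) := by
  ext ⟨i, j⟩ ⟨k, l⟩
  fin_cases i <;> fin_cases j <;> fin_cases k <;> fin_cases l <;>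
    simp [swapOp, Matrix.kroneckerMap_apply, Matrix.single, Matrix.add_apply]

lemma key (c : ℂ) :
    (c • Matrix.single 0 0 (1:ℂ) + ((1-c)/2) • 1) ⊗ₖ
      (c • Matrix.single 0 0 (1:ℂ) + ((1-c)/2) • 1)
    + (c • Matrix.single 0 1 (1:ℂ)) ⊗ₖ (c • Matrix.single 1 0 (1:ℂ))
    + (c • Matrix.single 1 0 (1:ℂ)) ⊗ₖ (c • Matrix.single 0 1 (1:ℂ))
    + (c • Matrix.single 1 1 (1:ℂ) + ((1-c)/2) • 1) ⊗ₖ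
      (c • Matrix.single 1 1 (1:ℂ) + ((1-c)/2) • 1)
    = ((1 - c^2)/2) • (1 : Matrix (Fin 2 × Fin 2) (Fin 2 × Fin 2) ℂ) + c^2 • swapOp := by
  ext ⟨i, j⟩ ⟨k, l⟩
  fin_cases i <;> fin_cases j <;> fin_cases k <;> fin_cases l <;>
    (simp [swapOp, Matrix.kroneckerMap_apply, Matrix.single, Matrix.add_apply,
      Matrix.smul_apply, Matrix.one_apply, Prod.ext_iff]; try ring)

theorem composite_two_copy_action (q qa lam : ℝ)
    (hq0 : 0 ≤ q) (hq1 : q < 1) (hqa0 : 0 ≤ qa) (hqa1 : qa < 1)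
    (hlam : lam = (1 - q) ^ 2 / (1 - qa) ^ 2)
    (T : Matrix (Fin 2 × Fin 2) (Fin 2 × Fin 2) ℂ →ₗ[ℂ]
      Matrix (Fin 2 × Fin 2) (Fin 2 × Fin 2) ℂ)
    (hT : ∀ A B : Matrix (Fin 2) (Fin 2) ℂ,
      T (A ⊗ₖ B) = antinoise qa (depol q A) ⊗ₖ antinoise qa (depol q B)) :
    T 1 = 1 ∧
      T swapOp = (((1 - (lam : ℂ)) / 2) •
          (1 : Matrix (Fin 2 × Fin 2) (Fin 2 × Fin 2) ℂ) +
        (lam : ℂ) • swapOp) ∧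
      (1 < lam ↔ q < qa) ∧ (lam < 1 ↔ qa < q) := by
  have hqaR : (1 : ℝ) - qa ≠ 0 := by linarith
  have hqa : (1:ℂ) - (qa:ℂ) ≠ 0 := by
    intro h
    apply hqaR
    have := congrArg Complex.re h
    simpa using this
  set c : ℂ := (1 - (q:ℂ)) / (1 - (qa:ℂ)) with hc
  have hlamC : (lam : ℂ) = c ^ 2 := by
    rw [hlam, hc, div_pow]; push_cast; ring
  have hscal : ((q:ℂ) - qa) / (2 * (1 - qa)) * 1 = (1 - c) / 2 := by
    have h1c : 1 - c = ((q:ℂ) - qa) / (1 - qa) := by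
      rw [hc, eq_div_iff hqa, sub_mul, div_mul_cancel₀ _ hqa]; ring
    rw [mul_one, h1c, div_div, mul_comm]
  have hE00 : antinoise qa (depol q (Matrix.single 0 0 (1:ℂ))) =
      c • Matrix.single 0 0 (1:ℂ) + ((1-c)/2) • 1 := by
    rw [M_eq q qa hqa, Matrix.trace_single_eq_same, hscal]
  have hE11 : antinoise qa (depol q (Matrix.single 1 1 (1:ℂ))) =
      c • Matrix.single 1 1 (1:ℂ) + ((1-c)/2) • 1 := by
    rw [M_eq q qa hqa, Matrix.trace_single_eq_same, hscal]
  have hE01 : antinoise qa (depol q (Matrix.single 0 1 (1:ℂ))) =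
      c • Matrix.single 0 1 (1:ℂ) := by
    rw [M_eq q qa hqa, Matrix.trace_single_eq_of_ne (i := (0 : Fin 2)) (j := 1) (c := (1:ℂ)) (by decide)]
    simp only [mul_zero, zero_smul, add_zero]
    rfl
  have hE10 : antinoise qa (depol q (Matrix.single 1 0 (1:ℂ))) =
      c • Matrix.single 1 0 (1:ℂ) := by
    rw [M_eq q qa hqa, Matrix.trace_single_eq_of_ne (i := (1 : Fin 2)) (j := 0) (c := (1:ℂ)) (by decide)]
    simp only [mul_zero, zero_smul, add_zero]
    rfl
  have hM1 : antinoise qa (depol q (1 : Matrix (Fin 2) (Fin 2) ℂ)) = 1 := by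
    rw [M_eq q qa hqa, Matrix.trace_one, Fintype.card_fin, Nat.cast_ofNat]
    match_scalars
    field_simp
    ring
  refine ⟨?_, ?_, ?_, ?_⟩
  · rw [show (1 : Matrix (Fin 2 × Fin 2) (Fin 2 × Fin 2) ℂ) =
        (1 : Matrix (Fin 2) (Fin 2) ℂ) ⊗ₖ (1 : Matrix (Fin 2) (Fin 2) ℂ) from
      (Matrix.one_kronecker_one).symm]
    rw [hT, hM1, Matrix.one_kronecker_one]
  · conv_lhs => rw [swap_decomp]
    simp only [map_add, hT]
    rw [hE00, hE01, hE10, hE11, key, ← hlamC]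
  · constructor
    · intro h
      by_contra hcon
      push_neg at hcon
      rw [hlam, one_lt_div (by positivity)] at h
      nlinarith
    · intro h; rw [hlam, one_lt_div (by positivity)]; nlinarith
  · constructor
    · intro h
      by_contra hcon
      push_neg at hcon
      rw [hlam, div_lt_one (by positivity)] at h
      nlinarith
    · intro h; rw [hlam, div_lt_one (by positivity)]; nlinarith
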